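/- Let b be a ρ-cocycle for an isometric linear representation ρ of a group G on a uniformly convex Banach space B. Then b is a coboundary (i.e., there exists ξ ∈ B with b(g) = ξ − ρ(g)ξ for all g) if and only if b has bounded range. -/

import Mathlib

/-- Scaled uniform convexity: on balls of radius `r ≤ R₀`, with `δ` not depending on `r`. -/
lemma uc_scaled (B : Type) [NormedAddCommGroup B] [NormedSpace ℝ B] [UniformConvexSpace B]
    {ε R₀ : ℝ} (hε : 0 < ε) (hR : 0 < R₀) :
    ∃ δ : ℝ, 0 < δ ∧ δ ≤ 1 ∧ ∀ r : ℝ, 0 < r → r ≤ R₀ → ∀ x y : B, ‖x‖ ≤ r → ‖y‖ ≤ r →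
      ε ≤ ‖x - y‖ → ‖x + y‖ ≤ (2 - δ) * r := by
  obtain ⟨δ, hδ, H⟩ := exists_forall_closed_ball_dist_add_le_two_sub B
    (div_pos hε hR)
  refine ⟨min δ 1, lt_min hδ one_pos, min_le_right _ _, fun r hr hrR x y hx hy hxy => ?_⟩
  have h1 : ‖(r⁻¹ • x : B)‖ ≤ 1 := by
    rw [norm_smul, Real.norm_eq_abs, abs_of_pos (inv_pos.2 hr)]
    rw [inv_mul_le_iff₀ hr, mul_one]; exact hx
  have h2 : ‖(r⁻¹ • y : B)‖ ≤ 1 := by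
    rw [norm_smul, Real.norm_eq_abs, abs_of_pos (inv_pos.2 hr)]
    rw [inv_mul_le_iff₀ hr, mul_one]; exact hy
  have h3 : ε / R₀ ≤ ‖(r⁻¹ • x : B) - r⁻¹ • y‖ := by
    rw [← smul_sub, norm_smul, Real.norm_eq_abs, abs_of_pos (inv_pos.2 hr)]
    calc ε / R₀ ≤ ε / r := by
          apply div_le_div_of_nonneg_left hε.le hr hrR
      _ ≤ r⁻¹ * ‖x - y‖ := by
          rw [div_eq_inv_mul]
          exact mul_le_mul_of_nonneg_left hxy (inv_nonneg.2 hr.le)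
  have := H h1 h2 h3
  rw [← smul_add, norm_smul, Real.norm_eq_abs, abs_of_pos (inv_pos.2 hr),
    inv_mul_le_iff₀ hr] at this
  calc ‖x + y‖ ≤ (2 - δ) * r := by rw [mul_comm]; exact this
    _ ≤ (2 - min δ 1) * r := by
        apply mul_le_mul_of_nonneg_right _ hr.le
        have := min_le_left δ 1; linarith

/-- Let `ρ` be an isometric linear representation of a group `G` on a
uniformly convex Banach space `B` and `b` a `ρ`-cocycle. Then `b` is a coboundary
(there is `ξ ∈ B` with `b g = ξ - ρ g ξ` for all `g`) iff `b` has bounded range. -/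
theorem cocycle_coboundary_iff_bounded
    (G : Type) [Group G]
    (B : Type) [NormedAddCommGroup B] [NormedSpace ℝ B] [UniformConvexSpace B]
    [CompleteSpace B]
    (ρ : G →* (B ≃ₗᵢ[ℝ] B)) (b : G → B)
    (hb : ∀ g h : G, b (g * h) = b g + ρ g (b h)) :
    (∃ ξ : B, ∀ g : G, b g = ξ - ρ g ξ) ↔ Bornology.IsBounded (Set.range b) := by
  constructor
  · rintro ⟨ξ, hξ⟩
    rw [isBounded_iff_forall_norm_le]
    refine ⟨2 * ‖ξ‖, ?_⟩
    rintro _ ⟨g, rfl⟩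
    rw [hξ g]
    calc ‖ξ - ρ g ξ‖ ≤ ‖ξ‖ + ‖ρ g ξ‖ := norm_sub_le _ _
      _ = 2 * ‖ξ‖ := by rw [(ρ g).norm_map]; ring
  · intro hbound
    obtain ⟨M, hM⟩ := isBounded_iff_forall_norm_le.1 hbound
    -- circumradius function
    set r : B → ℝ := fun x => ⨆ g, ‖b g - x‖ with hr_def
    have hbdd : ∀ x : B, BddAbove (Set.range fun g => ‖b g - x‖) := by
      intro x
      refine ⟨M + ‖x‖, ?_⟩
      rintro _ ⟨g, rfl⟩
      calc ‖b g - x‖ ≤ ‖b g‖ + ‖x‖ := norm_sub_le _ _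
        _ ≤ M + ‖x‖ := by
            have := hM (b g) (Set.mem_range_self g); linarith
    have hle : ∀ x (g : G), ‖b g - x‖ ≤ r x := fun x g => le_ciSup (hbdd x) g
    have hrle : ∀ x (c : ℝ), (∀ g, ‖b g - x‖ ≤ c) → r x ≤ c := fun x c h => ciSup_le h
    have hr0 : ∀ x, 0 ≤ r x := fun x => le_trans (norm_nonneg _) (hle x 1)
    -- infimum of r
    set R : ℝ := ⨅ x : B, r x with hR_def
    have hRbdd : BddBelow (Set.range r) := by
      refine ⟨0, ?_⟩; rintro _ ⟨x, rfl⟩; exact hr0 x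
    have hRle : ∀ x, R ≤ r x := fun x => ciInf_le hRbdd x
    have hR0 : 0 ≤ R := le_ciInf hr0
    -- minimizing sequence
    have hx : ∀ n : ℕ, ∃ y : B, r y < R + 1 / (n + 1) := by
      intro n
      apply exists_lt_of_ciInf_lt
      have : (0:ℝ) < 1 / (n + 1) := by positivity
      linarith
    choose x hx using hx
    -- midpoint estimate
    have hmid : ∀ (s δ : ℝ) (u v : B), 0 < s → r u ≤ s → r v ≤ s →
        (∀ p q : B, ‖p‖ ≤ s → ‖q‖ ≤ s → ‖u - v‖ ≤ ‖p - q‖ → ‖p + q‖ ≤ (2 - δ) * s) →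
        R ≤ (1 - δ/2) * s := by
      intro s δ u v hs hu hv H
      have key : ∀ g : G, ‖b g - (2:ℝ)⁻¹ • (u + v)‖ ≤ (1 - δ/2) * s := by
        intro g
        have h1 : ‖b g - u‖ ≤ s := le_trans (hle u g) hu
        have h2 : ‖b g - v‖ ≤ s := le_trans (hle v g) hv
        have h3 : ‖u - v‖ ≤ ‖(b g - u) - (b g - v)‖ := by
          have heq : (b g - u) - (b g - v) = v - u := by abel
          rw [heq, norm_sub_rev]
        have h4 := H (b g - u) (b g - v) h1 h2 h3
        have h5 : b g - (2:ℝ)⁻¹ • (u + v) = (2:ℝ)⁻¹ • ((b g - u) + (b g - v)) := by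
          module
        rw [h5, norm_smul, Real.norm_eq_abs]
        have : |(2:ℝ)⁻¹| = (2:ℝ)⁻¹ := by norm_num
        rw [this]
        calc (2:ℝ)⁻¹ * ‖(b g - u) + (b g - v)‖ ≤ (2:ℝ)⁻¹ * ((2 - δ) * s) := by
              apply mul_le_mul_of_nonneg_left h4; norm_num
          _ = (1 - δ/2) * s := by ring
      exact le_trans (hRle _) (hrle _ _ key)
    -- Cauchy
    have hcauchy : CauchySeq x := by
      rw [Metric.cauchySeq_iff]
      intro ε hε
      by_cases hRpos : 0 < R
      · obtain ⟨δ, hδ0, hδ1, hδ⟩ := uc_scaled B hε (show (0:ℝ) < R + 1 by linarith)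
        set t : ℝ := min (δ * R / 4) 1 with ht_def
        have ht0 : 0 < t := lt_min (by positivity) one_pos
        obtain ⟨N, hN⟩ := exists_nat_gt (1 / t)
        refine ⟨N, fun m hm n hn => ?_⟩
        rw [dist_eq_norm]
        by_contra hcon
        push_neg at hcon
        have hmt : (1:ℝ) / (m + 1) ≤ t := by
          rw [div_le_iff₀ (by positivity)]
          have h1 : (1:ℝ)/t < N := hN
          have h2 : (N:ℝ) ≤ m := Nat.cast_le.2 hm
          rw [div_lt_iff₀ ht0] at h1
          nlinarith [ht0]
        have hnt : (1:ℝ) / (n + 1) ≤ t := by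
          rw [div_le_iff₀ (by positivity)]
          have h1 : (1:ℝ)/t < N := hN
          have h2 : (N:ℝ) ≤ n := Nat.cast_le.2 hn
          rw [div_lt_iff₀ ht0] at h1
          nlinarith [ht0]
        have hs : 0 < R + t := by linarith
        have hsR : R + t ≤ R + 1 := by
          have := min_le_right (δ * R / 4) 1; simp only [ht_def]; linarith
        have hmid' := hmid (R + t) δ (x m) (x n) hs
          (le_trans (hx m).le (by linarith))
          (le_trans (hx n).le (by linarith))
          (fun p q hp hq hpq => hδ (R + t) hs hsR p q hp hq (le_trans hcon hpq))
        -- R ≤ (1 - δ/2)(R + t), but t ≤ δR/4 gives contradiction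
        have ht4 : t ≤ δ * R / 4 := min_le_left _ _
        nlinarith [hδ0, hRpos, ht0]
      · push_neg at hRpos
        have hR' : R = 0 := le_antisymm hRpos hR0
        obtain ⟨N, hN⟩ := exists_nat_gt (2 / ε)
        refine ⟨N, fun m hm n hn => ?_⟩
        rw [dist_eq_norm]
        have bound : ∀ k : ℕ, N ≤ k → ‖x k - b 1‖ < ε / 2 := by
          intro k hk
          have h1 : ‖b 1 - x k‖ ≤ r (x k) := hle _ 1
          have h2 : r (x k) < 1 / (k + 1) := by
            have := hx k; rw [hR'] at this; linarith
          have h3 : (1:ℝ) / (k + 1) ≤ ε / 2 := by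
            rw [div_le_div_iff₀ (by positivity) (by norm_num)]
            have h4 : (2:ℝ)/ε < N := hN
            have h5 : (N:ℝ) ≤ k := Nat.cast_le.2 hk
            rw [div_lt_iff₀ hε] at h4
            nlinarith
          rw [norm_sub_rev] at h1
          linarith
        calc ‖x m - x n‖ ≤ ‖x m - b 1‖ + ‖b 1 - x n‖ := norm_sub_le_norm_sub_add_norm_sub _ _ _
          _ < ε / 2 + ε / 2 := by
              have := bound m hm
              have h2 := bound n hn
              rw [norm_sub_rev (b 1)]
              linarith
          _ = ε := by ring
    obtain ⟨ξ, hξlim⟩ := cauchySeq_tendsto_of_complete hcauchy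
    -- r ξ = R
    have hlip : ∀ u v : B, r u ≤ r v + ‖u - v‖ := by
      intro u v
      apply hrle
      intro g
      calc ‖b g - u‖ ≤ ‖b g - v‖ + ‖v - u‖ := norm_sub_le_norm_sub_add_norm_sub _ _ _
        _ ≤ r v + ‖u - v‖ := by
            rw [norm_sub_rev v u]
            exact add_le_add (hle v g) le_rfl
    have hrξ : r ξ = R := by
      refine le_antisymm ?_ (hRle ξ)
      apply le_of_forall_pos_le_add
      intro e he
      obtain ⟨N1, hN1⟩ := exists_nat_gt (2 / e)
      obtain ⟨N2, hN2⟩ := (Metric.tendsto_atTop.1 hξlim) (e/2) (by linarith)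
      set n := max N1 N2
      have h1 : r ξ ≤ r (x n) + ‖ξ - x n‖ := hlip _ _
      have h2 : r (x n) < R + 1/(n+1) := hx n
      have h3 : (1:ℝ)/(n+1) ≤ e/2 := by
        rw [div_le_div_iff₀ (by positivity) (by norm_num)]
        have h4 : (2:ℝ)/e < N1 := hN1
        have h5 : (N1:ℝ) ≤ n := Nat.cast_le.2 (le_max_left _ _)
        rw [div_lt_iff₀ he] at h4
        nlinarith
      have h6 : ‖ξ - x n‖ < e/2 := by
        have := hN2 n (le_max_right _ _)
        rw [dist_eq_norm] at this
        rw [norm_sub_rev]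
        exact this
      linarith
    -- uniqueness of the circumcenter
    have huniq : ∀ η : B, r η = R → η = ξ := by
      intro η hη
      by_contra hne
      have hεpos : 0 < ‖ξ - η‖ := by
        rw [norm_pos_iff, sub_ne_zero]
        exact fun h => hne h.symm
      by_cases hRpos : 0 < R
      · obtain ⟨δ, hδ0, hδ1, hδ⟩ := uc_scaled B hεpos hRpos
        have hmid' := hmid R δ ξ η hRpos hrξ.le hη.le
          (fun p q hp hq hpq => hδ R hRpos le_rfl p q hp hq (le_trans le_rfl hpq))
        nlinarith
      · push_neg at hRpos
        have hR' : R = 0 := le_antisymm hRpos hR0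
        have h1 : ‖b 1 - ξ‖ ≤ 0 := by rw [← hR', ← hrξ]; exact hle ξ 1
        have h2 : ‖b 1 - η‖ ≤ 0 := by
          rw [← hR', ← hη]; exact hle η 1
        have h3 : b 1 = ξ := by
          rwa [← sub_eq_zero, ← norm_le_zero_iff]
        have h4 : b 1 = η := by
          rwa [← sub_eq_zero, ← norm_le_zero_iff]
        exact hne (h4 ▸ h3)
    -- invariance
    refine ⟨ξ, fun g => ?_⟩
    have hinv : r (ρ g ξ + b g) = r ξ := by
      have hfun : (fun h : G => ‖b h - (ρ g ξ + b g)‖)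
          = (fun h : G => ‖b h - ξ‖) ∘ (fun h : G => g⁻¹ * h) := by
        funext h
        simp only [Function.comp_apply]
        have h1 : b h = b g + ρ g (b (g⁻¹ * h)) := by
          rw [← hb]; rw [mul_inv_cancel_left]
        rw [h1]
        have h2 : b g + ρ g (b (g⁻¹ * h)) - (ρ g ξ + b g) = ρ g (b (g⁻¹ * h) - ξ) := by
          rw [map_sub]; abel
        rw [h2, (ρ g).norm_map]
      have hrange : Set.range (fun h : G => ‖b h - (ρ g ξ + b g)‖)
          = Set.range (fun h : G => ‖b h - ξ‖) := by
        rw [hfun]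
        exact Function.Surjective.range_comp
          (fun h => ⟨g * h, inv_mul_cancel_left g h⟩) (fun h : G => ‖b h - ξ‖)
      show sSup (Set.range fun h : G => ‖b h - (ρ g ξ + b g)‖)
          = sSup (Set.range fun h : G => ‖b h - ξ‖)
      rw [hrange]
    have := huniq (ρ g ξ + b g) (by rw [hinv, hrξ])
    exact eq_sub_iff_add_eq.2 (by rw [add_comm]; exact this)
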